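/- Assume the CZ-decomposition setting in dimension n, with a parameter A ≥ 1 and a choice of representative x(S) ∈ S for each cluster S; moreover, for each cluster S and each Q ∈ CZ with Q ∩ H(S) ≠ ∅, fix a point x(Q,S) ∈ Q ∩ H(S). There exist A₀ ≥ 1 and C > 0 depending only on n such that for every A ≥ A₀ the following holds: for any cluster S, letting Q(S) ∈ CZ be the cube containing x(S), and for any R ≥ δ_{Q(S)}, the number of cubes Q ∈ CZ with Q ∩ H(S) ≠ ∅ and |x(Q,S) − x(S)| ≤ R is at most C·A^{2n}·(R/δ_{Q(S)})^n. -/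

import Mathlib

noncomputable section

/-- The constant `c_G = 10⁻⁶`. -/
def cG : ℝ := 1 / 1000000

/-- A cube `Q = {a} + (−δ, δ]ⁿ` with center `c = a` and half-sidelength `d = δ`
(so the sidelength of `Q` is `2d`). -/
structure Cube (n : ℕ) where
  c : Fin n → ℝ
  d : ℝ

namespace Cube

/-- The cube as a subset of `ℝⁿ`. -/
def toSet {n : ℕ} (Q : Cube n) : Set (Fin n → ℝ) :=
  {x | ∀ i, Q.c i - Q.d < x i ∧ x i ≤ Q.c i + Q.d}

/-- The sidelength `δ_Q` of a cube. -/
def side {n : ℕ} (Q : Cube n) : ℝ := 2 * Q.d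

/-- The dilate `tQ`: same center, sidelength `t·δ_Q`. -/
def scale {n : ℕ} (t : ℝ) (Q : Cube n) : Cube n := ⟨Q.c, t * Q.d⟩

/-- `Q` is a dyadic cube `∏ᵢ (jᵢ·2^k, (jᵢ+1)·2^k]`. -/
def Dyadic {n : ℕ} (Q : Cube n) : Prop :=
  ∃ k : ℤ, ∃ j : Fin n → ℤ, Q.d = (2 : ℝ) ^ k / 2 ∧
    ∀ i, Q.c i = ((j i : ℝ) + 1 / 2) * (2 : ℝ) ^ k

end Cube

/-- The CZ-decomposition setting: a partition `CZ` of `ℝⁿ` into dyadic cubes with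
good geometry, and a finite set `E` with `#E ≥ 2` and `#(E ∩ 9Q) ≥ 2` for all `Q ∈ CZ`. -/
structure CZSetting (n : ℕ) where
  CZ : Set (Cube n)
  E : Finset (Fin n → ℝ)
  dyadic : ∀ Q ∈ CZ, Q.Dyadic
  partition : ∀ x : Fin n → ℝ, ∃! Q, Q ∈ CZ ∧ x ∈ Q.toSet
  goodGeom : ∀ Q ∈ CZ, ∀ Q' ∈ CZ,
    ((Q.scale (1 + 10 * cG)).toSet ∩ (Q'.scale (1 + 10 * cG)).toSet).Nonempty →
      Q.side / 64 ≤ Q'.side ∧ Q'.side ≤ 64 * Q.side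
  two_le_card : 2 ≤ E.card
  dense : ∀ Q ∈ CZ, 2 ≤ ((E : Set (Fin n → ℝ)) ∩ (Q.scale 9).toSet).ncard

/-- `S` is a cluster of `E` (with parameter `A`): `S ⊆ E`, `#S ≥ 2` and
`dist(S, E∖S) ≥ A³·diam S` (with the convention `dist(S,∅) = +∞`). -/
def IsCluster {n : ℕ} (A : ℝ) (E S : Finset (Fin n → ℝ)) : Prop :=
  S ⊆ E ∧ 2 ≤ S.card ∧
  ∀ x ∈ S, ∀ y ∈ E \ S, A ^ 3 * Metric.diam (S : Set (Fin n → ℝ)) ≤ dist x y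

/-- `Q` is interstellar: `diam(A¹⁰Q ∩ E) ≤ A⁻¹⁰·δ_Q` and `(1+3c_G)Q ∩ E = ∅`. -/
def Interstellar {n : ℕ} (A : ℝ) (E : Finset (Fin n → ℝ)) (Q : Cube n) : Prop :=
  Metric.diam ((Q.scale (A ^ 10)).toSet ∩ (E : Set (Fin n → ℝ))) ≤ (A ^ 10)⁻¹ * Q.side ∧
  (Q.scale (1 + 3 * cG)).toSet ∩ (E : Set (Fin n → ℝ)) = ∅

/-- The halo `H(S)` of a cluster `S` with representative `xS`:
`{x : A·diam S < |x − xS| < A⁻¹·dist(S, E∖S)}` (with `dist(S,∅) = +∞`). -/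
def Halo {n : ℕ} (A : ℝ) (E S : Finset (Fin n → ℝ)) (xS : Fin n → ℝ) :
    Set (Fin n → ℝ) :=
  {x | A * Metric.diam (S : Set (Fin n → ℝ)) < dist x xS ∧
    ∀ y ∈ S, ∀ z ∈ E \ S, A * dist x xS < dist y z}

/-- `Q` is a keystone cube of `CZ`: every `Q' ∈ CZ` meeting `100Q` is at least as big. -/
def Keystone {n : ℕ} (CZ : Set (Cube n)) (Q : Cube n) : Prop :=
  Q ∈ CZ ∧ ∀ Q' ∈ CZ, (Q'.toSet ∩ (Q.scale 100).toSet).Nonempty → Q.side ≤ Q'.side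

open MeasureTheory Set Bornology ENNReal

section Aux

variable {n : ℕ}

lemma Cube.toSet_eq_pi (Q : Cube n) :
    Q.toSet = Set.pi Set.univ (fun i => Set.Ioc (Q.c i - Q.d) (Q.c i + Q.d)) := by
  ext x
  simp [Cube.toSet, Set.mem_pi, Set.mem_Ioc]

lemma Cube.measurableSet_toSet (Q : Cube n) : MeasurableSet Q.toSet := by
  rw [Cube.toSet_eq_pi]
  exact MeasurableSet.univ_pi fun i => measurableSet_Ioc

lemma Cube.dist_le_of_mem {Q : Cube n} {x y : Fin n → ℝ} (hd : 0 ≤ Q.d)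
    (hx : x ∈ Q.toSet) (hy : y ∈ Q.toSet) : dist x y ≤ 2 * Q.d := by
  rw [dist_pi_le_iff (by linarith)]
  intro i
  obtain ⟨h1, h2⟩ := hx i
  obtain ⟨h3, h4⟩ := hy i
  rw [Real.dist_eq, abs_le]
  constructor <;> linarith

lemma Cube.mem_scale_of_mem {Q : Cube n} {x : Fin n → ℝ} {t : ℝ} (ht : 1 ≤ t) (hd : 0 ≤ Q.d)
    (hx : x ∈ Q.toSet) : x ∈ (Q.scale t).toSet := by
  intro i
  obtain ⟨h1, h2⟩ := hx i
  have hdt : Q.d ≤ t * Q.d := le_mul_of_one_le_left hd ht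
  exact ⟨by simp only [Cube.scale]; linarith, by simp only [Cube.scale]; linarith⟩

end Aux

set_option maxHeartbeats 1000000 in
/-- **Lemma 5.11 (Lemma 7): counting CZ cubes meeting a halo within radius `R`.** -/
theorem statement14 (n : ℕ) (hn : 1 ≤ n) :
    ∃ A₀ C : ℝ, 1 ≤ A₀ ∧ 0 < C ∧
      ∀ A : ℝ, A₀ ≤ A →
      ∀ (S : CZSetting n) (xR : Finset (Fin n → ℝ) → (Fin n → ℝ))
        (xQS : Cube n → Finset (Fin n → ℝ) → (Fin n → ℝ)),
        (∀ T : Finset (Fin n → ℝ), IsCluster A S.E T → xR T ∈ T) →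
        (∀ Q ∈ S.CZ, ∀ T : Finset (Fin n → ℝ), IsCluster A S.E T →
          (Q.toSet ∩ Halo A S.E T (xR T)).Nonempty →
          xQS Q T ∈ Q.toSet ∩ Halo A S.E T (xR T)) →
        ∀ T : Finset (Fin n → ℝ), IsCluster A S.E T →
        ∀ QS ∈ S.CZ, xR T ∈ QS.toSet →
        ∀ R : ℝ, QS.side ≤ R →
          {Q ∈ S.CZ | (Q.toSet ∩ Halo A S.E T (xR T)).Nonempty ∧
            dist (xQS Q T) (xR T) ≤ R}.Finite ∧
          ({Q ∈ S.CZ | (Q.toSet ∩ Halo A S.E T (xR T)).Nonempty ∧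
            dist (xQS Q T) (xR T) ≤ R}.ncard : ℝ) ≤
            C * A ^ (2 * n) * (R / QS.side) ^ n := by
  classical
  refine ⟨2, 24000000 ^ n, one_le_two, by positivity, ?_⟩
  intro A hA S xR xQS hxR hxQS T hT QS hQS hxSQS R hR
  set xS := xR T with hxSdef
  set F := {Q ∈ S.CZ | (Q.toSet ∩ Halo A S.E T xS).Nonempty ∧ dist (xQS Q T) xS ≤ R} with hF
  have hcG : cG = 1 / 1000000 := rfl
  have hA1 : (1:ℝ) ≤ A := le_trans one_le_two hA
  have hA0 : (0:ℝ) < A := by linarith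
  have hdpos : ∀ Q ∈ S.CZ, 0 < Q.d := by
    intro Q hQ
    obtain ⟨k, j, hk, -⟩ := S.dyadic Q hQ
    rw [hk]
    positivity
  have hDpos : 0 < QS.side := by
    have := hdpos QS hQS
    unfold Cube.side
    linarith
  have hR0 : 0 < R := lt_of_lt_of_le hDpos hR
  have hxST : xS ∈ T := hxR T hT
  have hTb : IsBounded (T : Set (Fin n → ℝ)) := T.finite_toSet.isBounded
  have hdiamT : 0 ≤ Metric.diam (T : Set (Fin n → ℝ)) := Metric.diam_nonneg
  -- the side of every cube in `F` is at least `cG/4` times the side of `QS`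
  have hside : ∀ Q ∈ F, cG / 4 * QS.side ≤ Q.side := by
    intro Q hQF
    obtain ⟨hQ, hne, hdist⟩ := hQF
    obtain ⟨hxQ, hhalo1, hhalo2⟩ := hxQS Q hQ T hT hne
    set x := xQS Q T with hxdef
    have hQd := hdpos Q hQ
    have hdistnn : 0 ≤ dist x xS := dist_nonneg
    by_cases hcase : dist x xS ≤ 5 * cG * QS.side
    · -- `x` is close to `xS`, so by good geometry `Q` is comparable to `QS`
      have hQSd := hdpos QS hQS
      have hxmem : x ∈ (QS.scale (1 + 10 * cG)).toSet := by
        intro i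
        obtain ⟨h1, h2⟩ := hxSQS i
        have h3 : dist (x i) (xS i) ≤ 5 * cG * QS.side := le_trans (dist_le_pi_dist x xS i) hcase
        rw [Real.dist_eq, abs_le] at h3
        obtain ⟨h4, h5⟩ := h3
        have hsQS : QS.side = 2 * QS.d := rfl
        constructor
        · show QS.c i - (1 + 10 * cG) * QS.d < x i
          nlinarith
        · show x i ≤ QS.c i + (1 + 10 * cG) * QS.d
          nlinarith
      have hxmem' : x ∈ (Q.scale (1 + 10 * cG)).toSet :=
        Cube.mem_scale_of_mem (by rw [hcG]; norm_num) hQd.le hxQ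
      have hgg := (S.goodGeom QS hQS Q hQ ⟨x, hxmem, hxmem'⟩).1
      have hu : cG / 4 * QS.side ≤ QS.side / 64 := by rw [hcG]; linarith
      linarith
    · push_neg at hcase
      -- `x` is far from `xS`; use two points of `E` in `9Q`
      have hfin : ((S.E : Set (Fin n → ℝ)) ∩ (Q.scale 9).toSet).Finite :=
        S.E.finite_toSet.inter_of_left _
      obtain ⟨p, q, hp, hq, hpq⟩ := (Set.one_lt_ncard_iff hfin).mp (by have := S.dense Q hQ; omega)
      have hx9 : x ∈ (Q.scale 9).toSet := Cube.mem_scale_of_mem (by norm_num) hQd.le hxQ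
      have h9d : (0:ℝ) ≤ 9 * Q.d := by linarith
      have hsQ : Q.side = 2 * Q.d := rfl
      -- key: there is a point `z ∈ E ∩ 9Q` giving `dist x xS ≤ 36 * Q.d`
      have hkey : dist x xS ≤ 36 * Q.d := by
        have hdxz : ∀ z, z ∈ (S.E : Set (Fin n → ℝ)) ∩ (Q.scale 9).toSet →
            dist x z ≤ 18 * Q.d := by
          intro z hz
          have h := Cube.dist_le_of_mem (Q := Q.scale 9) h9d hx9 hz.2
          simp only [Cube.scale] at h
          linarith
        by_cases hpT : p ∈ T
        · by_cases hqT : q ∈ T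
          · -- both in T: but they cannot both be within diam T of xS unless ... use halo1
            have hdp : dist p xS ≤ Metric.diam (T : Set (Fin n → ℝ)) :=
              Metric.dist_le_diam_of_mem hTb (Finset.mem_coe.mpr hpT) (Finset.mem_coe.mpr hxST)
            have h1 : dist x xS ≤ dist x p + dist p xS := dist_triangle x p xS
            have h2 := hdxz p hp
            -- halo1 : A * diam T < dist x xS, A ≥ 2
            nlinarith
          · -- q ∈ E \ T
            have hmem : q ∈ S.E \ T := Finset.mem_sdiff.mpr ⟨Finset.mem_coe.mp hq.1, hqT⟩
            have h3 := hhalo2 xS hxST q hmem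
            have h4 : dist xS q ≤ dist xS x + dist x q := dist_triangle xS x q
            have h5 := hdxz q hq
            rw [dist_comm xS x] at h4
            nlinarith
        · have hmem : p ∈ S.E \ T := Finset.mem_sdiff.mpr ⟨Finset.mem_coe.mp hp.1, hpT⟩
          have h3 := hhalo2 xS hxST p hmem
          have h4 : dist xS p ≤ dist xS x + dist x p := dist_triangle xS x p
          have h5 := hdxz p hp
          rw [dist_comm xS x] at h4
          nlinarith
      nlinarith
  -- the ambient box
  set B : Set (Fin n → ℝ) := Set.pi Set.univ (fun i => Set.Icc (xS i - 3 * R) (xS i + 3 * R))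
    with hBdef
  have hBmeas : MeasurableSet B := MeasurableSet.univ_pi fun i => measurableSet_Icc
  have hBvol : volume B = ENNReal.ofReal (6 * R) ^ n := by
    rw [hBdef, volume_pi_pi]
    have : ∀ i : Fin n, volume (Set.Icc (xS i - 3 * R) (xS i + 3 * R))
        = ENNReal.ofReal (6 * R) := by
      intro i
      rw [Real.volume_Icc]
      ring_nf
    simp [this]
  set m : ℝ := cG / 4 * QS.side with hmdef
  have hm0 : 0 < m := by rw [hmdef, hcG]; linarith
  -- volume lower bound for each cube in the family
  have hvol : ∀ Q ∈ F, ENNReal.ofReal m ^ n ≤ volume (Q.toSet ∩ B) := by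
    intro Q hQF
    obtain ⟨hQ, hne, hdist⟩ := hQF
    obtain ⟨hxQ, -, -⟩ := hxQS Q hQ T hT hne
    set x := xQS Q T with hxdef
    have hQd := hdpos Q hQ
    have hsQ := hside Q ⟨hQ, hne, hdist⟩
    have hxnear : ∀ i, |x i - xS i| ≤ R := by
      intro i
      rw [← Real.dist_eq]
      exact le_trans (dist_le_pi_dist x xS i) hdist
    set a : Fin n → ℝ := fun i => max (Q.c i - Q.d) (x i - 2 * R) with hadef
    set b : Fin n → ℝ := fun i => min (Q.c i + Q.d) (x i + 2 * R) with hbdef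
    have hablen : ∀ i, m ≤ b i - a i := by
      intro i
      obtain ⟨h1, h2⟩ := hxQ i
      have hm1 : m ≤ 2 * Q.d := by
        have : Q.side = 2 * Q.d := rfl
        linarith
      have hm2 : m ≤ 2 * R := by
        rw [hmdef, hcG]
        linarith
      have : min (2 * Q.d) (2 * R) ≤ b i - a i := by
        rw [hadef, hbdef]
        rcases max_cases (Q.c i - Q.d) (x i - 2 * R) with ⟨hma, hma'⟩ | ⟨hma, hma'⟩ <;>
          rcases min_cases (Q.c i + Q.d) (x i + 2 * R) with ⟨hmb, hmb'⟩ | ⟨hmb, hmb'⟩ <;>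
          simp only [hma, hmb] <;>
          first
            | exact le_trans (min_le_left _ _) (by linarith)
            | exact le_trans (min_le_right _ _) (by linarith)
      exact le_trans (le_min hm1 hm2) this
    have hPsub : Set.pi Set.univ (fun i => Set.Ioc (a i) (b i)) ⊆ Q.toSet ∩ B := by
      intro y hy
      constructor
      · intro i
        have hyi := hy i (Set.mem_univ i)
        obtain ⟨hy1, hy2⟩ := hyi
        have ha1 : Q.c i - Q.d ≤ a i := le_max_left _ _
        have hb1 : b i ≤ Q.c i + Q.d := min_le_left _ _
        exact ⟨lt_of_le_of_lt ha1 hy1, le_trans hy2 hb1⟩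
      · intro i _
        have hyi := hy i (Set.mem_univ i)
        obtain ⟨hy1, hy2⟩ := hyi
        have ha2 : x i - 2 * R ≤ a i := le_max_right _ _
        have hb2 : b i ≤ x i + 2 * R := min_le_right _ _
        have habs := abs_le.mp (hxnear i)
        constructor
        · have : xS i - 3 * R ≤ x i - 2 * R := by linarith [habs.1, habs.2]
          linarith [lt_of_le_of_lt (le_trans this ha2) hy1]
        · have : x i + 2 * R ≤ xS i + 3 * R := by linarith [habs.1, habs.2]
          linarith [le_trans hy2 hb2]
    calc ENNReal.ofReal m ^ n
        = ∏ _i : Fin n, ENNReal.ofReal m := by simp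
      _ ≤ ∏ i : Fin n, volume (Set.Ioc (a i) (b i)) := by
          apply Finset.prod_le_prod'
          intro i _
          rw [Real.volume_Ioc]
          exact ENNReal.ofReal_le_ofReal (hablen i)
      _ = volume (Set.pi Set.univ (fun i => Set.Ioc (a i) (b i))) := (volume_pi_pi _).symm
      _ ≤ volume (Q.toSet ∩ B) := measure_mono hPsub
  -- distinct CZ cubes are disjoint
  have hcubedisj : ∀ Q ∈ S.CZ, ∀ Q' ∈ S.CZ, Q ≠ Q' → Disjoint Q.toSet Q'.toSet := by
    intro Q hQ Q' hQ' hne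
    rw [Set.disjoint_left]
    intro z hz hz'
    obtain ⟨Q0, -, huniq⟩ := S.partition z
    exact hne ((huniq Q ⟨hQ, hz⟩).trans (huniq Q' ⟨hQ', hz'⟩).symm)
  have hdisj : F.PairwiseDisjoint (fun Q : Cube n => Q.toSet ∩ B) := by
    intro Q hQ Q' hQ' hne
    exact Disjoint.mono inter_subset_left inter_subset_left (hcubedisj Q hQ.1 Q' hQ'.1 hne)
  -- counting
  have hkey : ∀ t : Finset (Cube n), ↑t ⊆ F →
      (t.card : ℝ≥0∞) * ENNReal.ofReal m ^ n ≤ ENNReal.ofReal (6 * R) ^ n := by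
    intro t ht
    calc (t.card : ℝ≥0∞) * ENNReal.ofReal m ^ n
        = ∑ _Q ∈ t, ENNReal.ofReal m ^ n := by rw [Finset.sum_const, nsmul_eq_mul]
      _ ≤ ∑ Q ∈ t, volume (Q.toSet ∩ B) := Finset.sum_le_sum fun Q hQ => hvol Q (ht hQ)
      _ = volume (⋃ Q ∈ t, Q.toSet ∩ B) := (measure_biUnion_finset (hdisj.subset ht)
            (fun Q _ => (Cube.measurableSet_toSet Q).inter hBmeas)).symm
      _ ≤ volume B := measure_mono (Set.iUnion₂_subset fun Q _ => inter_subset_right)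
      _ = ENNReal.ofReal (6 * R) ^ n := hBvol
  have hmne : ENNReal.ofReal m ^ n ≠ 0 := pow_ne_zero _ (ENNReal.ofReal_pos.mpr hm0).ne'
  have hmtop : ENNReal.ofReal m ^ n ≠ ⊤ := ENNReal.pow_ne_top ENNReal.ofReal_ne_top
  have hFfin : F.Finite := by
    by_contra hinf
    obtain ⟨N, hN⟩ := ENNReal.exists_nat_gt
      (show ENNReal.ofReal (6 * R) ^ n / ENNReal.ofReal m ^ n ≠ ⊤ from
        (ENNReal.div_lt_top (ENNReal.pow_ne_top ENNReal.ofReal_ne_top) hmne).ne)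
    obtain ⟨t, hts, htcard⟩ := Set.Infinite.exists_subset_card_eq hinf N
    have h1 := hkey t hts
    rw [htcard] at h1
    have h2 : ENNReal.ofReal (6 * R) ^ n < (N : ℝ≥0∞) * ENNReal.ofReal m ^ n :=
      (ENNReal.div_lt_iff (Or.inl hmne) (Or.inl hmtop)).mp hN
    exact absurd h1 (not_le.mpr h2)
  refine ⟨hFfin, ?_⟩
  -- cardinality bound
  have hcard : (F.ncard : ℝ≥0∞) * ENNReal.ofReal m ^ n ≤ ENNReal.ofReal (6 * R) ^ n := by
    have h := hkey hFfin.toFinset (by simp)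
    rwa [← Set.ncard_eq_toFinset_card F hFfin] at h
  have h6R : (0:ℝ) ≤ 6 * R := by linarith
  have hreal : (F.ncard : ℝ) * m ^ n ≤ (6 * R) ^ n := by
    have h := ENNReal.toReal_mono (ENNReal.pow_ne_top ENNReal.ofReal_ne_top) hcard
    simpa [ENNReal.toReal_mul, ENNReal.toReal_pow, ENNReal.toReal_ofReal hm0.le,
      ENNReal.toReal_ofReal h6R, ENNReal.toReal_ofReal hR0.le] using h
  have hDne : QS.side ≠ 0 := hDpos.ne'
  have heq : (6 * R) ^ n = 24000000 ^ n * (R / QS.side) ^ n * m ^ n := by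
    rw [← mul_pow, ← mul_pow]
    congr 1
    rw [hmdef, hcG]
    field_simp
    ring
  have hmn : (0:ℝ) < m ^ n := pow_pos hm0 n
  have h1 : (F.ncard : ℝ) ≤ 24000000 ^ n * (R / QS.side) ^ n := by
    rw [heq] at hreal
    exact le_of_mul_le_mul_right hreal hmn
  have h3 : (1:ℝ) ≤ A ^ (2 * n) := one_le_pow₀ hA1
  have h2 : (0:ℝ) ≤ (R / QS.side) ^ n := by positivity
  calc (F.ncard : ℝ) ≤ 24000000 ^ n * (R / QS.side) ^ n := h1
    _ = 24000000 ^ n * 1 * (R / QS.side) ^ n := by ring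
    _ ≤ 24000000 ^ n * A ^ (2 * n) * (R / QS.side) ^ n := by
        apply mul_le_mul_of_nonneg_right _ h2
        have hC : (0:ℝ) ≤ 24000000 ^ n := by positivity
        nlinarith
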